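/- arXiv:2309.17215 — 2 statements merged into one kernel-verified Lean document; each statement's English description precedes it below -/
import Mathlib

section
/- Let X ∈ ℝ^{n×p} satisfy Xᵀ X = I_p, and let ε ∈ ℝ^{n×p} satisfy Xᵀ ε + εᵀ X = 0. Define the polar retraction R_X(ε) = (X + ε) · (((X + ε)ᵀ (X + ε))^{1/2})^{−1}, where M^{1/2} denotes the positive semidefinite square root of the positive definite matrix M = (X + ε)ᵀ(X + ε). Then ‖R_X(ε) − X − ε‖_F ≤ (1 + √2/2) · ‖ε‖_F², where ‖·‖_F is the Frobenius norm. -/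
open Matrix

section OldSqrt

open scoped ComplexOrder

/-- The square root of a positive semidefinite matrix, as defined in the older Mathlib
(removed since): `U * diagonal (√ eigenvalues) * U⋆`. -/
noncomputable def Matrix.PosSemidef.sqrt {n : Type*} [Fintype n] [DecidableEq n] {𝕜 : Type*} [RCLike 𝕜]
    {A : Matrix n n 𝕜} (hA : A.PosSemidef) : Matrix n n 𝕜 :=
  hA.1.eigenvectorUnitary.1 * diagonal ((↑) ∘ (√·) ∘ hA.1.eigenvalues) *
    (star hA.1.eigenvectorUnitary : Matrix n n 𝕜)

end OldSqrt

/-- The Frobenius norm of a real matrix. -/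
noncomputable def frobNorm {n p : ℕ} (A : Matrix (Fin n) (Fin p) ℝ) : ℝ :=
  Real.sqrt (∑ i, ∑ j, A i j ^ 2)

namespace StiefelAux

lemma trace_transpose_mul {n p : ℕ} (A : Matrix (Fin n) (Fin p) ℝ) :
    (Aᵀ * A).trace = ∑ i, ∑ j, A i j ^ 2 := by
  simp only [Matrix.trace, Matrix.diag, Matrix.mul_apply, Matrix.transpose_apply, sq]
  exact Finset.sum_comm ..

lemma frobNorm_eq {n p : ℕ} (A : Matrix (Fin n) (Fin p) ℝ) :
    frobNorm A = Real.sqrt ((Aᵀ * A).trace) := by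
  rw [frobNorm, trace_transpose_mul]

lemma trace_nonneg_of_psd {p : ℕ} {P : Matrix (Fin p) (Fin p) ℝ} (hP : P.PosSemidef) :
    0 ≤ P.trace := by
  rw [Matrix.trace]
  refine Finset.sum_nonneg fun i _ => ?_
  exact hP.diag_nonneg

open scoped ComplexOrder in
lemma sqrt_psd {p : ℕ} {𝕜 : Type*} [RCLike 𝕜] {A : Matrix (Fin p) (Fin p) 𝕜} (hA : A.PosSemidef) : hA.sqrt.PosSemidef := by
  unfold Matrix.PosSemidef.sqrt
  have : (diagonal ((↑) ∘ (√·) ∘ hA.1.eigenvalues : Fin p → 𝕜)).PosSemidef :=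
    posSemidef_diagonal_iff.mpr (fun i => by simp [Real.sqrt_nonneg])
  simpa [star_eq_conjTranspose] using
    this.mul_mul_conjTranspose_same (hA.1.eigenvectorUnitary : Matrix (Fin p) (Fin p) 𝕜)
open scoped ComplexOrder in
lemma sqrt_mul_self' {p : ℕ} {𝕜 : Type*} [RCLike 𝕜] {A : Matrix (Fin p) (Fin p) 𝕜} (hA : A.PosSemidef) :
    hA.sqrt * hA.sqrt = A := by
  have hU : (star hA.1.eigenvectorUnitary : Matrix (Fin p) (Fin p) 𝕜) * hA.1.eigenvectorUnitary.1 = 1 :=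
    Unitary.star_mul_self_of_mem hA.1.eigenvectorUnitary.prop
  calc hA.sqrt * hA.sqrt = hA.1.eigenvectorUnitary.1 * (diagonal ((↑) ∘ (√·) ∘ hA.1.eigenvalues) *
      ((star hA.1.eigenvectorUnitary : Matrix (Fin p) (Fin p) 𝕜) * hA.1.eigenvectorUnitary.1) *
      diagonal ((↑) ∘ (√·) ∘ hA.1.eigenvalues)) * (star hA.1.eigenvectorUnitary : Matrix (Fin p) (Fin p) 𝕜) := by
        simp only [Matrix.PosSemidef.sqrt, Matrix.mul_assoc]
    _ = hA.1.eigenvectorUnitary.1 * diagonal (RCLike.ofReal ∘ hA.1.eigenvalues) *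
        (star hA.1.eigenvectorUnitary : Matrix (Fin p) (Fin p) 𝕜) := by
        rw [hU, Matrix.mul_one, diagonal_mul_diagonal]
        have h := fun i => Real.mul_self_sqrt (hA.eigenvalues_nonneg i)
        simp only [Function.comp_def, ← RCLike.ofReal_mul, h]
    _ = A := by
        conv_rhs => rw [hA.1.spectral_theorem]
        rfl

end StiefelAux

/-- **Lemma 1 for the polar retraction on the Stiefel manifold**: for `X` with
`Xᵀ X = I` and tangent `ε` (`Xᵀ ε + εᵀ X = 0`), the polar retraction
`R_X(ε) = (X + ε)(((X + ε)ᵀ(X + ε))^{1/2})⁻¹` satisfies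
`‖R_X(ε) − X − ε‖_F ≤ (1 + √2/2) ‖ε‖_F²`. -/


theorem stmt_10 (n p : ℕ) (X ε : Matrix (Fin n) (Fin p) ℝ)
    (hX : Xᵀ * X = 1) (hε : Xᵀ * ε + εᵀ * X = 0)
    (hM : ((X + ε)ᵀ * (X + ε)).PosSemidef) :
    frobNorm ((X + ε) * (hM.sqrt)⁻¹ - X - ε) ≤
      (1 + Real.sqrt 2 / 2) * frobNorm ε ^ 2 := by
  classical
  set S := εᵀ * ε with hSdef
  have hS : S.PosSemidef := by
    have := Matrix.posSemidef_conjTranspose_mul_self ε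
    rwa [conjTranspose_eq_transpose_of_trivial] at this
  have hSt : Sᵀ = S := by rw [hSdef, transpose_mul, transpose_transpose]
  have hMeq : (X + ε)ᵀ * (X + ε) = 1 + S := by
    have h1 : Xᵀ * ε = -(εᵀ * X) := eq_neg_of_add_eq_zero_left hε
    rw [transpose_add, Matrix.add_mul, Matrix.mul_add, Matrix.mul_add, hX, h1]
    abel
  have hMpd : ((X + ε)ᵀ * (X + ε)).PosDef := by
    rw [hMeq]; exact Matrix.PosDef.one.add_posSemidef hS
  set Q := hM.sqrt with hQdef
  have hQpsd : Q.PosSemidef := StiefelAux.sqrt_psd hM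
  have hQt : Qᵀ = Q := by
    rw [← conjTranspose_eq_transpose_of_trivial]; exact hQpsd.1
  have hQQM : Q * Q = (X + ε)ᵀ * (X + ε) := StiefelAux.sqrt_mul_self' hM
  have hQQ : Q * Q = 1 + S := by rw [hQQM, hMeq]
  have hdetQ : IsUnit Q.det := by
    have h2 : Q.det * Q.det = ((X + ε)ᵀ * (X + ε)).det := by rw [← det_mul, hQQM]
    have h3 := hMpd.det_pos
    refine isUnit_iff_ne_zero.2 fun h => ?_
    rw [h, mul_zero] at h2
    exact h3.ne' h2.symm
  have hQi : Q * Q⁻¹ = 1 := mul_nonsing_inv Q hdetQ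
  set T := Q + 1 with hTdef
  have hTpd : T.PosDef := Matrix.PosDef.posSemidef_add hQpsd Matrix.PosDef.one
  have hdetT : IsUnit T.det := (Matrix.isUnit_iff_isUnit_det T).1 hTpd.isUnit
  set B := T⁻¹ with hBdef
  have hTB : T * B = 1 := mul_nonsing_inv T hdetT
  have hBT : B * T = 1 := nonsing_inv_mul T hdetT
  have hTt : Tᵀ = T := by rw [hTdef, transpose_add, hQt, transpose_one]
  have hBt : Bᵀ = B := by rw [hBdef, transpose_nonsing_inv, hTt]
  -- key identity: 1 - Q = -(S * B)
  have hid : (1 : Matrix (Fin p) (Fin p) ℝ) - Q = -(S * B) := by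
    have h3 : (Q - 1) * T = S := by
      have h4 : (Q - 1) * (Q + 1) = Q * Q - 1 := by noncomm_ring
      rw [hTdef, h4, hQQ]; abel
    have h5 : S * B = Q - 1 := by
      rw [← h3, Matrix.mul_assoc, hTB, Matrix.mul_one]
    rw [h5]; abel
  -- Gram identity for the main expression
  have hGram1 : ((X + ε) * (Q⁻¹ - 1))ᵀ * ((X + ε) * (Q⁻¹ - 1)) = (1 - Q)ᵀ * (1 - Q) := by
    have hC : Q * (Q⁻¹ - 1) = 1 - Q := by rw [Matrix.mul_sub, hQi, Matrix.mul_one]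
    calc ((X + ε) * (Q⁻¹ - 1))ᵀ * ((X + ε) * (Q⁻¹ - 1))
        = (Q⁻¹ - 1)ᵀ * (((X + ε)ᵀ * (X + ε)) * (Q⁻¹ - 1)) := by
          rw [transpose_mul]; simp only [Matrix.mul_assoc]
      _ = (Q⁻¹ - 1)ᵀ * ((Q * Q) * (Q⁻¹ - 1)) := by rw [hQQM]
      _ = (Q * (Q⁻¹ - 1))ᵀ * (Q * (Q⁻¹ - 1)) := by
          rw [transpose_mul, hQt]; simp only [Matrix.mul_assoc]
      _ = (1 - Q)ᵀ * (1 - Q) := by rw [hC]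
  -- (1 - B*B) is PSD
  have hBB : ((1 : Matrix (Fin p) (Fin p) ℝ) - B * B).PosSemidef := by
    have hTT1 : T * T - 1 = 1 + (S + (Q + Q)) := by
      have h6 : (Q + 1) * (Q + 1) = Q * Q + (Q + Q) + 1 := by noncomm_ring
      rw [hTdef, h6, hQQ]; abel
    have hpsd : ((1 : Matrix (Fin p) (Fin p) ℝ) + (S + (Q + Q))).PosSemidef :=
      Matrix.PosSemidef.one.add (hS.add (hQpsd.add hQpsd))
    have h7 := hpsd.conjTranspose_mul_mul_same B
    have h8 : Bᴴ * (1 + (S + (Q + Q))) * B = 1 - B * B := by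
      rw [conjTranspose_eq_transpose_of_trivial, hBt, ← hTT1]
      calc B * (T * T - 1) * B = (B * T) * (T * B) - B * B := by noncomm_ring
        _ = 1 - B * B := by rw [hBT, hTB, Matrix.one_mul]
    rwa [h8] at h7
  -- trace inequality
  have htr : ((S * B)ᵀ * (S * B)).trace ≤ (Sᵀ * S).trace := by
    have h9 := hBB.conjTranspose_mul_mul_same S
    rw [conjTranspose_eq_transpose_of_trivial, hSt] at h9
    have h0 := StiefelAux.trace_nonneg_of_psd h9
    have h10 : S * (1 - B * B) * S = S * S - S * (B * B) * S := by noncomm_ring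
    have h11 : ((S * B)ᵀ * (S * B)).trace = (S * (B * B) * S).trace := by
      rw [transpose_mul, hBt, hSt]
      calc (B * S * (S * B)).trace = ((S * B) * (B * S)).trace := by
            rw [Matrix.trace_mul_comm]
        _ = (S * (B * B) * S).trace := by simp only [Matrix.mul_assoc]
    rw [h10, Matrix.trace_sub] at h0
    rw [h11, hSt]
    linarith
  have hfrob1 : frobNorm ((X + ε) * Q⁻¹ - X - ε) = frobNorm (S * B) := by
    have hexpr : (X + ε) * Q⁻¹ - X - ε = (X + ε) * (Q⁻¹ - 1) := by
      rw [Matrix.mul_sub, Matrix.mul_one]; abel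
    have hneg : (1 - Q)ᵀ * (1 - Q) = (S * B)ᵀ * (S * B) := by
      rw [hid, transpose_neg, Matrix.neg_mul, Matrix.mul_neg, neg_neg]
    rw [hexpr, StiefelAux.frobNorm_eq, hGram1, hneg, ← StiefelAux.frobNorm_eq]
  have hfrob2 : frobNorm (S * B) ≤ frobNorm S := by
    rw [StiefelAux.frobNorm_eq, StiefelAux.frobNorm_eq]
    exact Real.sqrt_le_sqrt htr
  have htrS : 0 ≤ S.trace := StiefelAux.trace_nonneg_of_psd hS
  have hfS : frobNorm S ≤ S.trace := by
    rw [StiefelAux.frobNorm_eq, hSt]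
    have hCS : ∀ i j, S i j ^ 2 ≤ S i i * S j j := by
      intro i j
      have := Finset.sum_mul_sq_le_sq_mul_sq Finset.univ (fun k => ε k i) (fun k => ε k j)
      simpa [hSdef, Matrix.mul_apply, Matrix.transpose_apply, sq] using this
    have h12 : (S * S).trace = ∑ i, ∑ j, S i j ^ 2 := by
      have := StiefelAux.trace_transpose_mul S
      rwa [hSt] at this
    have h13 : (∑ i, ∑ j, S i j ^ 2) ≤ S.trace ^ 2 := by
      have h14 : S.trace ^ 2 = ∑ i, ∑ j, S i i * S j j := by
        rw [Matrix.trace, sq, Finset.sum_mul_sum]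
        rfl
      rw [h14]
      exact Finset.sum_le_sum fun i _ => Finset.sum_le_sum fun j _ => hCS i j
    calc Real.sqrt ((S * S).trace) ≤ Real.sqrt (S.trace ^ 2) := by
          rw [h12]; exact Real.sqrt_le_sqrt h13
      _ = S.trace := Real.sqrt_sq htrS
  have hfe : frobNorm ε ^ 2 = S.trace := by
    rw [frobNorm, Real.sq_sqrt (by positivity), hSdef, StiefelAux.trace_transpose_mul]
  have hfinal : frobNorm ((X + ε) * Q⁻¹ - X - ε) ≤ frobNorm ε ^ 2 := by
    rw [hfrob1, hfe]
    exact hfrob2.trans hfS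
  have h2nn : (0:ℝ) ≤ Real.sqrt 2 := Real.sqrt_nonneg 2
  have hεnn : (0:ℝ) ≤ frobNorm ε ^ 2 := by rw [hfe]; exact htrS
  calc frobNorm ((X + ε) * Q⁻¹ - X - ε) ≤ 1 * frobNorm ε ^ 2 := by
        rw [one_mul]; exact hfinal
    _ ≤ (1 + Real.sqrt 2 / 2) * frobNorm ε ^ 2 := by nlinarith
end

section
/- Let d ≥ 1 and n ≥ 1 be natural numbers, let r > 0, and let μ be the d-fold product measure on ℝ^d of the one-dimensional Gaussian measure with mean 0 and variance r². Then μ({z ∈ ℝ^d : Σ_{i=1}^d z_i² ≤ r² d (1 + √(log n / d))²}) ≥ 1 − 1/√n; equivalently, a centered Gaussian vector z ∼ N(0, r² I_d) satisfies ‖z‖₂² ≤ r² d (1 + √(log n / d))² with probability at least 1 − 1/√n. -/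
open MeasureTheory ProbabilityTheory Real
open scoped ENNReal NNReal

-- integrability of exp(lam x^2) against a Gaussian, when 2*lam*v < 1
lemma gauss_exp_sq_integrable (v : ℝ≥0) (hv : (0:ℝ) < v) (lam : ℝ)
    (hlam : 2 * lam * v < 1) :
    Integrable (fun x : ℝ => rexp (lam * x ^ 2)) (gaussianReal 0 v) := by
  have hvne : v ≠ 0 := by exact_mod_cast hv.ne'
  rw [gaussianReal_of_var_ne_zero 0 hvne]
  have hmeas : Measurable fun x : ℝ => (gaussianPDFReal 0 v x).toNNReal :=
    (measurable_gaussianPDFReal 0 v).real_toNNReal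
  rw [show gaussianPDF 0 v = fun x => ((gaussianPDFReal 0 v x).toNNReal : ℝ≥0∞) from rfl]
  rw [integrable_withDensity_iff_integrable_smul hmeas]
  have hb : 0 < (1 - 2 * lam * v) / (2 * v) := div_pos (by linarith) (by positivity)
  have key : (fun x : ℝ => ((gaussianPDFReal 0 v x).toNNReal : ℝ≥0) • rexp (lam * x ^ 2))
      = fun x : ℝ => (√(2 * π * v))⁻¹ * rexp (-((1 - 2 * lam * v) / (2 * v)) * x ^ 2) := by
    funext x
    have h1 : ((gaussianPDFReal 0 v x).toNNReal : ℝ≥0) • rexp (lam * x ^ 2)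
        = gaussianPDFReal 0 v x * rexp (lam * x ^ 2) := by
      rw [NNReal.smul_def, smul_eq_mul,
        Real.coe_toNNReal _ (gaussianPDFReal_nonneg 0 v x)]
    rw [h1, gaussianPDFReal]
    rw [mul_assoc, ← Real.exp_add]
    congr 1
    field_simp
    ring
  rw [key]
  exact (integrable_exp_neg_mul_sq hb).const_mul _

lemma gauss_exp_sq_integral (v : ℝ≥0) (hv : (0:ℝ) < v) (lam : ℝ)
    (hlam : 2 * lam * v < 1) :
    ∫ x, rexp (lam * x ^ 2) ∂(gaussianReal 0 v) = (√(1 - 2 * lam * v))⁻¹ := by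
  have hvne : v ≠ 0 := by exact_mod_cast hv.ne'
  rw [gaussianReal_of_var_ne_zero 0 hvne]
  have hmeas : Measurable fun x : ℝ => (gaussianPDFReal 0 v x).toNNReal :=
    (measurable_gaussianPDFReal 0 v).real_toNNReal
  rw [show gaussianPDF 0 v = fun x => ((gaussianPDFReal 0 v x).toNNReal : ℝ≥0∞) from rfl]
  rw [integral_withDensity_eq_integral_smul hmeas]
  have hb : 0 < (1 - 2 * lam * v) / (2 * v) := div_pos (by linarith) (by positivity)
  have key : (fun x : ℝ => ((gaussianPDFReal 0 v x).toNNReal : ℝ≥0) • rexp (lam * x ^ 2))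
      = fun x : ℝ => (√(2 * π * v))⁻¹ * rexp (-((1 - 2 * lam * v) / (2 * v)) * x ^ 2) := by
    funext x
    have h1 : ((gaussianPDFReal 0 v x).toNNReal : ℝ≥0) • rexp (lam * x ^ 2)
        = gaussianPDFReal 0 v x * rexp (lam * x ^ 2) := by
      rw [NNReal.smul_def, smul_eq_mul,
        Real.coe_toNNReal _ (gaussianPDFReal_nonneg 0 v x)]
    rw [h1, gaussianPDFReal]
    rw [mul_assoc, ← Real.exp_add]
    congr 1
    field_simp
    ring
  rw [key, integral_const_mul, integral_gaussian]
  have hπ : (0:ℝ) < π := Real.pi_pos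
  rw [← Real.sqrt_inv, ← Real.sqrt_inv, ← Real.sqrt_mul (by positivity)]
  congr 1
  have hc : (0:ℝ) < 1 - 2 * lam * v := by linarith
  rw [div_div_eq_mul_div]
  field_simp [hc.ne', Real.pi_ne_zero, hv.ne']

lemma pi_integral_pow (d : ℕ) (m : Measure ℝ) [SigmaFinite m] (f : ℝ → ℝ) :
    ∫ x : Fin d → ℝ, ∏ i, f (x i) ∂(Measure.pi fun _ => m) = (∫ x, f x ∂m) ^ d := by
  letI : MeasureSpace ℝ := ⟨m⟩
  haveI : SigmaFinite (volume : Measure ℝ) := ‹SigmaFinite m›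
  have : (Measure.pi fun _ : Fin d => m) = (volume : Measure (Fin d → ℝ)) := rfl
  rw [this]
  erw [MeasureTheory.integral_fintype_prod_eq_pow (ι := Fin d) f]
  simp only [Fintype.card_fin]
  rfl

lemma pi_integrable_pow (d : ℕ) (m : Measure ℝ) [SigmaFinite m] (f : ℝ → ℝ)
    (hf : Integrable f m) :
    Integrable (fun x : Fin d → ℝ => ∏ i, f (x i)) (Measure.pi fun _ => m) := by
  letI : MeasureSpace ℝ := ⟨m⟩
  haveI : SigmaFinite (volume : Measure ℝ) := ‹SigmaFinite m›
  have : (Measure.pi fun _ : Fin d => m) = (volume : Measure (Fin d → ℝ)) := rfl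
  rw [this]
  exact MeasureTheory.Integrable.fintype_prod (𝕜 := ℝ) (f := fun _ : Fin d => f) fun _ => hf

/-- Gaussian norm concentration used in the proof of Theorem 1: for
`z ∼ N(0, r² I_d)` (realized as the `d`-fold product of `N(0, r²)`),
`‖z‖₂² ≤ r² d (1 + √(log n / d))²` holds with probability at least `1 − 1/√n`. -/
theorem stmt_12 (d n : ℕ) (hd : 1 ≤ d) (hn : 1 ≤ n) (r : ℝ) (hr : 0 < r)
    (μ : Measure (Fin d → ℝ))
    (hμ : μ = Measure.pi fun _ : Fin d => gaussianReal 0 ⟨r ^ 2, sq_nonneg r⟩) :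
    ENNReal.ofReal (1 - 1 / Real.sqrt n) ≤
      μ {z : Fin d → ℝ |
        ∑ i, z i ^ 2 ≤ r ^ 2 * d * (1 + Real.sqrt (Real.log n / d)) ^ 2} := by
  subst hμ
  rcases eq_or_lt_of_le hn with h1 | h2
  · rw [← h1]
    norm_num
  -- now 2 ≤ n
  set v : ℝ≥0 := ⟨r ^ 2, sq_nonneg r⟩ with hv_def
  have hv : (0:ℝ) < v := by
    have hvr : ((v:ℝ)) = r ^ 2 := rfl
    rw [hvr]; positivity
  have hdpos : (0:ℝ) < d := by exact_mod_cast hd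
  have hlogn : 0 < Real.log n := Real.log_pos (by exact_mod_cast h2)
  set t : ℝ := Real.sqrt (Real.log n / d) with ht_def
  have ht : 0 < t := Real.sqrt_pos.mpr (div_pos hlogn hdpos)
  have ht2 : t ^ 2 = Real.log n / d := Real.sq_sqrt (le_of_lt (div_pos hlogn hdpos))
  have h1t : (0:ℝ) < 1 + t := by linarith
  set lam : ℝ := t / (2 * (v:ℝ) * (1 + t)) with hlam_def
  have hlampos : 0 < lam := div_pos ht (by positivity)
  have h2lv : 2 * lam * (v:ℝ) = t / (1 + t) := by
    rw [hlam_def]; field_simp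
  have hlam1 : 2 * lam * (v:ℝ) < 1 := by
    rw [h2lv]; rw [div_lt_one h1t]; linarith
  set a : ℝ := r ^ 2 * d * (1 + t) ^ 2 with ha_def
  set μpi : Measure (Fin d → ℝ) := Measure.pi fun _ : Fin d => gaussianReal 0 v with hμpi
  set X : (Fin d → ℝ) → ℝ := fun z => ∑ i, z i ^ 2 with hX_def
  have hfun : (fun z : Fin d → ℝ => rexp (lam * X z))
      = fun z => ∏ i, rexp (lam * z i ^ 2) := by
    funext z
    rw [hX_def, Finset.mul_sum, Real.exp_sum]
  have hint1 : Integrable (fun x : ℝ => rexp (lam * x ^ 2)) (gaussianReal 0 v) :=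
    gauss_exp_sq_integrable v hv lam hlam1
  have hint : Integrable (fun z => rexp (lam * X z)) μpi := by
    rw [hfun, hμpi]
    exact pi_integrable_pow d _ _ hint1
  have hmgf : mgf X μpi lam = (Real.sqrt (1 + t)) ^ d := by
    unfold mgf
    rw [hfun, hμpi]
    have hprod := pi_integral_pow d (gaussianReal 0 v) (fun x => rexp (lam * x ^ 2))
    rw [hprod, gauss_exp_sq_integral v hv lam hlam1]
    rw [h2lv]
    congr 1
    rw [show 1 - t / (1 + t) = (1 + t)⁻¹ by field_simp; ring, Real.sqrt_inv, inv_inv]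
  have chern := measure_ge_le_exp_mul_mgf (X := X) (μ := μpi) (t := lam) a hlampos.le hint
  rw [hmgf] at chern
  -- bound the rhs by 1 / sqrt n
  have hlama : lam * a = d * t * (1 + t) / 2 := by
    rw [hlam_def, ha_def, show ((v:ℝ)) = r ^ 2 from rfl]
    field_simp
  have hsq : Real.sqrt (1 + t) = rexp (Real.log (1 + t) / 2) := by
    rw [← Real.log_sqrt (by linarith), Real.exp_log (Real.sqrt_pos.mpr h1t)]
  have hpow : (Real.sqrt (1 + t)) ^ d = rexp (d * (Real.log (1 + t) / 2)) := by
    rw [hsq, ← Real.exp_nat_mul]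
  have hsn : 1 / Real.sqrt n = rexp (-(Real.log n / 2)) := by
    have hn0 : (0:ℝ) < n := by positivity
    rw [← Real.log_sqrt hn0.le, Real.exp_neg, Real.exp_log (Real.sqrt_pos.mpr hn0),
      one_div]
  have hlogle : Real.log (1 + t) ≤ t := by
    have := Real.log_le_sub_one_of_pos h1t
    linarith
  have hlog_eq : Real.log n = d * t ^ 2 := by
    rw [ht2]; field_simp
  have hbound : rexp (-lam * a) * (Real.sqrt (1 + t)) ^ d ≤ 1 / Real.sqrt n := by
    rw [hpow, hsn, ← Real.exp_add, Real.exp_le_exp]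
    have hmul : (d:ℝ) * Real.log (1 + t) ≤ d * t :=
      mul_le_mul_of_nonneg_left hlogle hdpos.le
    rw [neg_mul, hlama, hlog_eq]
    nlinarith [hmul]
  have htail : μpi {z | a ≤ X z} ≤ ENNReal.ofReal (1 / Real.sqrt n) := by
    rw [ENNReal.le_ofReal_iff_toReal_le (measure_ne_top _ _) (by positivity)]
    exact chern.trans hbound
  have hcompl : μpi {z : Fin d → ℝ | X z ≤ a}ᶜ ≤ ENNReal.ofReal (1 / Real.sqrt n) := by
    refine le_trans (measure_mono ?_) htail
    intro z hz
    simp only [Set.mem_compl_iff, Set.mem_setOf_eq, not_le] at hz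
    exact le_of_lt hz
  have huniv : (1:ℝ≥0∞) ≤ μpi {z : Fin d → ℝ | X z ≤ a}
      + μpi {z : Fin d → ℝ | X z ≤ a}ᶜ := by
    rw [← measure_univ (μ := μpi), ← Set.union_compl_self {z : Fin d → ℝ | X z ≤ a}]
    exact measure_union_le _ _
  calc ENNReal.ofReal (1 - 1 / Real.sqrt n)
      = 1 - ENNReal.ofReal (1 / Real.sqrt n) := by
        rw [← ENNReal.ofReal_one, ← ENNReal.ofReal_sub _ (by positivity)]
    _ ≤ 1 - μpi {z : Fin d → ℝ | X z ≤ a}ᶜ := tsub_le_tsub_left hcompl 1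
    _ ≤ μpi {z : Fin d → ℝ | X z ≤ a} := by
        rw [tsub_le_iff_right]
        exact huniv
end
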